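/- Let G be an infinite locally finite graph with maximum degree d_max and Hashimoto matrix H bounded on ℓ² with spectral radius ρ_{ℓ²}(H). For site percolation with p < 1/ρ_{ℓ²}(H), there exist ρ' < 1 and C > 0 such that for all vertices u ≠ v, τ_{u,v} ≤ C (ρ')^{d(u,v)}, i.e., connectivity decays exponentially in graph distance. -/

import Mathlib

open Filter MeasureTheory
open scoped ENNReal RealInnerProductSpace Classical

noncomputable abbrev l2 (A : Type*) := lp (fun _ : A => ℝ) 2

/-- standard basis vector `e_v` of `ℓ²(A)`. -/
noncomputable def e {A : Type*} [DecidableEq A] (v : A) : l2 A := lp.single 2 v (1 : ℝ)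

/-- In the configuration `ω`, vertices `u` and `v` are connected by an open path. -/
def openConn {V : Type*} (G : SimpleGraph V) (ω : V → Bool) (u v : V) : Prop :=
  ∃ w : G.Walk u v, ∀ x ∈ w.support, ω x = true

open SimpleGraph

section L2
variable {A : Type*} [DecidableEq A]

lemma e_inner_coord (a : A) (f : l2 A) : ⟪e a, f⟫ = f a := by
  rw [e, lp.inner_single_left]
  simp [RCLike.inner_apply]

lemma e_inner_e (a b : A) : ⟪e a, e b⟫ = if a = b then (1:ℝ) else 0 := by
  rw [e_inner_coord, e]
  rcases eq_or_ne a b with rfl | h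
  · simp [lp.single_apply_self]
  · rw [lp.single_apply_ne _ _ _ h]
    simp [h]

lemma norm_e (a : A) : ‖(e a : l2 A)‖ = 1 := by
  have := lp.norm_single (p := (2 : ℝ≥0∞)) (E := fun _ : A => ℝ) (by norm_num) a (1:ℝ)
  simpa [e] using this

end L2

section Arcs
variable {V : Type*} (G : SimpleGraph V) [G.LocallyFinite]

/-- The darts leaving `v`. -/
noncomputable def outArcs (v : V) : Finset G.Dart :=
  Finset.univ.image (fun w : G.neighborSet v => G.dartOfNeighborSet v w)

/-- The darts entering `v`. -/
noncomputable def inArcs (v : V) : Finset G.Dart := (outArcs G v).image Dart.symm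

variable {G}

lemma mem_outArcs {v : V} {a : G.Dart} : a ∈ outArcs G v ↔ a.toProd.1 = v := by
  constructor
  · rintro h
    simp only [outArcs, Finset.mem_image, Finset.mem_univ, true_and] at h
    obtain ⟨w, rfl⟩ := h
    rfl
  · intro h
    refine Finset.mem_image.mpr ⟨⟨a.toProd.2, h ▸ a.adj⟩, Finset.mem_univ _, ?_⟩
    exact Dart.ext _ _ (Prod.ext h.symm rfl)

lemma mem_inArcs {v : V} {a : G.Dart} : a ∈ inArcs G v ↔ a.toProd.2 = v := by
  constructor
  · rintro h
    simp only [inArcs, Finset.mem_image] at h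
    obtain ⟨b, hb, rfl⟩ := h
    exact mem_outArcs.mp hb
  · intro h
    refine Finset.mem_image.mpr ⟨a.symm, mem_outArcs.mpr h, a.symm_symm⟩

lemma card_outArcs (v : V) : (outArcs G v).card = G.degree v := by
  rw [outArcs, Finset.card_image_of_injective _ (fun w w' hww' => ?_), Finset.card_univ,
    card_neighborSet_eq_degree]
  exact Subtype.ext (congrArg (fun d : G.Dart => d.toProd.2) hww')

lemma card_inArcs (v : V) : (inArcs G v).card = G.degree v := by
  rw [inArcs, Finset.card_image_of_injective _ Dart.symm_involutive.injective, card_outArcs]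

variable (G) in
/-- Darts that can follow dart `a` in a non-backtracking walk. -/
noncomputable def nextArcs (a : G.Dart) : Finset G.Dart :=
  (outArcs G a.toProd.2).filter (fun c => c ≠ a.symm)

lemma mem_nextArcs {a c : G.Dart} :
    c ∈ nextArcs G a ↔ c.toProd.1 = a.toProd.2 ∧ c ≠ a.symm := by
  simp [nextArcs, mem_outArcs]

end Arcs

section Split
variable {V : Type*} {G : SimpleGraph V}

/-- Split a nonempty walk into its first dart and the rest. -/
def splitW (v : V) : {x : V} → G.Walk x v → Option (Σ d : G.Dart, G.Walk d.toProd.2 v)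
  | _, SimpleGraph.Walk.nil => none
  | x, @SimpleGraph.Walk.cons _ _ _ y _ h q => some ⟨⟨(x, y), h⟩, q⟩

lemma splitW_inj {v x : V} {w₁ w₂ : G.Walk x v} (h₁ : w₁.length ≠ 0)
    (h : splitW v w₁ = splitW v w₂) : w₁ = w₂ := by
  cases w₁ with
  | nil => simp at h₁
  | @cons _ y₁ _ h₁' q₁ =>
    cases w₂ with
    | nil => simp [splitW] at h
    | @cons _ y₂ _ h₂' q₂ =>
      simp only [splitW, Option.some.injEq] at h
      obtain ⟨hd, hq⟩ := Sigma.ext_iff.mp h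
      have hy : y₁ = y₂ := congrArg (fun d : G.Dart => d.toProd.2) hd
      subst hy
      have : q₁ = q₂ := eq_of_heq hq
      subst this
      rfl

lemma walk_length_zero_unique {v x : V} (w₁ w₂ : G.Walk x v) (h₁ : w₁.length = 0)
    (h₂ : w₂.length = 0) : w₁ = w₂ := by
  cases w₁ with
  | nil =>
    cases w₂ with
    | nil => rfl
    | cons h q => simp at h₂
  | cons h q => simp at h₁

end Split

section Op
variable {V : Type*} {G : SimpleGraph V} [G.LocallyFinite]
variable (T : l2 G.Dart →L[ℝ] l2 G.Dart)
variable (hT : ∀ a b : G.Dart,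
      ⟪e a, T (e b)⟫ = if a.toProd.2 = b.toProd.1 ∧ b ≠ a.symm then (1 : ℝ) else 0)

include hT in
lemma T_star (a : G.Dart) :
    (ContinuousLinearMap.adjoint T) (e a) = ∑ c ∈ nextArcs G a, e c := by
  apply lp.ext
  funext c
  have lhs : ((ContinuousLinearMap.adjoint T) (e a) : ∀ _ : G.Dart, ℝ) c
      = ⟪e a, T (e c)⟫ := by
    rw [← e_inner_coord c, ContinuousLinearMap.adjoint_inner_right, real_inner_comm]
  have rhs : ((∑ c' ∈ nextArcs G a, e c' : l2 G.Dart) : ∀ _ : G.Dart, ℝ) c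
      = if c ∈ nextArcs G a then (1:ℝ) else 0 := by
    rw [← e_inner_coord c, inner_sum]
    simp_rw [e_inner_e]
    rw [Finset.sum_ite_eq (nextArcs G a) c (fun _ => (1:ℝ))]
  rw [lhs, rhs, hT]
  congr 1
  simp only [mem_nextArcs, eq_iff_iff]
  tauto

include hT in
lemma inner_T_apply (a : G.Dart) (f : l2 G.Dart) :
    ⟪e a, T f⟫ = ∑ c ∈ nextArcs G a, ⟪e c, f⟫ := by
  rw [← ContinuousLinearMap.adjoint_inner_left, T_star T hT, sum_inner]

end Op

section Count
variable {V : Type*} {G : SimpleGraph V} [G.LocallyFinite]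

variable (G) in
/-- Vector of in-arcs indicators at `v`. -/
noncomputable def yvec (v : V) : l2 G.Dart := ∑ b ∈ inArcs G v, e b

/-- Entry of `T^m` applied to `yvec`. -/
noncomputable def Fc (T : l2 G.Dart →L[ℝ] l2 G.Dart) (v : V) (m : ℕ) (a : G.Dart) : ℝ :=
  ⟪e a, (T ^ m) (yvec G v)⟫

variable (T : l2 G.Dart →L[ℝ] l2 G.Dart)
variable (hT : ∀ a b : G.Dart,
      ⟪e a, T (e b)⟫ = if a.toProd.2 = b.toProd.1 ∧ b ≠ a.symm then (1 : ℝ) else 0)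

lemma Fc_zero (v : V) (a : G.Dart) : Fc T v 0 a = if a.toProd.2 = v then 1 else 0 := by
  rw [Fc, pow_zero, ContinuousLinearMap.one_apply, yvec, inner_sum]
  simp_rw [e_inner_e]
  rw [Finset.sum_ite_eq (inArcs G v) a (fun _ => (1:ℝ))]
  congr 1
  simp [mem_inArcs]

include hT in
lemma Fc_succ (v : V) (m : ℕ) (a : G.Dart) :
    Fc T v (m+1) a = ∑ c ∈ nextArcs G a, Fc T v m c := by
  rw [Fc, pow_succ', ContinuousLinearMap.mul_apply, inner_T_apply T hT]
  rfl

variable (G) in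
/-- Walks of length `m` from the head of `a` to `v` whose `a`-extension is a path. -/
noncomputable def Sw (v : V) (m : ℕ) (a : G.Dart) : Finset (G.Walk a.toProd.2 v) :=
  (G.finsetWalkLength m a.toProd.2 v).filter (fun w => (SimpleGraph.Walk.cons a.adj w).IsPath)

lemma card_Sw_succ_le (v : V) (m : ℕ) (a : G.Dart) :
    (Sw G v (m+1) a).card ≤ ∑ d ∈ nextArcs G a, (Sw G v m d).card := by
  classical
  calc (Sw G v (m+1) a).card
      ≤ (((nextArcs G a).sigma (fun d => Sw G v m d)).image some).card := by
        apply Finset.card_le_card_of_injOn (splitW v)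
        · intro w hw
          simp only [Sw, Finset.mem_coe, Finset.mem_filter, mem_finsetWalkLength_iff] at hw
          obtain ⟨hlen, hpath⟩ := hw
          have hnn : ¬ w.Nil := by rw [SimpleGraph.Walk.nil_iff_length_eq]; omega
          obtain ⟨y, h, q, rfl⟩ := SimpleGraph.Walk.not_nil_iff.mp hnn
          have hsw : splitW v (SimpleGraph.Walk.cons h q) =
              some ⟨⟨(a.toProd.2, y), h⟩, q⟩ := rfl
          rw [hsw]
          refine Finset.mem_image.mpr ⟨⟨⟨(a.toProd.2, y), h⟩, q⟩, ?_, rfl⟩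
          rw [Finset.mem_sigma]
          constructor
          · rw [mem_nextArcs]
            refine ⟨rfl, fun hc => ?_⟩
            -- if the dart equals a.symm then y = a.1, contradicting path property
            have hy : y = a.toProd.1 := congrArg (fun d : G.Dart => d.toProd.2) hc
            have hns : a.toProd.1 ∉ (SimpleGraph.Walk.cons h q).support := by
              have := hpath.support_nodup
              rw [SimpleGraph.Walk.support_cons] at this
              exact (List.nodup_cons.mp this).1
            apply hns
            rw [SimpleGraph.Walk.support_cons]
            exact List.mem_cons.mpr (Or.inr (hy ▸ q.start_mem_support))
          · simp only [Sw, Finset.mem_filter, mem_finsetWalkLength_iff]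
            refine ⟨by simpa using hlen, ?_⟩
            exact hpath.of_cons
        · intro w₁ hw₁ w₂ hw₂ hsp
          simp only [Finset.coe_filter, Set.mem_setOf_eq, Sw, mem_finsetWalkLength_iff] at hw₁
          exact splitW_inj (by omega) hsp
    _ ≤ ((nextArcs G a).sigma (fun d => Sw G v m d)).card := Finset.card_image_le
    _ = ∑ d ∈ nextArcs G a, (Sw G v m d).card := Finset.card_sigma _ _

include hT in
lemma card_Sw_le (v : V) (m : ℕ) : ∀ a, ((Sw G v m a).card : ℝ) ≤ Fc T v m a := by
  induction m with
  | zero =>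
    intro a
    rw [Fc_zero]
    rcases eq_or_ne a.toProd.2 v with h | h
    · rw [if_pos h]
      have : (Sw G v 0 a).card ≤ 1 := by
        apply Finset.card_le_one.mpr
        intro w₁ h₁ w₂ h₂
        simp only [Sw, Finset.mem_filter, mem_finsetWalkLength_iff] at h₁ h₂
        exact walk_length_zero_unique _ _ h₁.1 h₂.1
      exact_mod_cast this
    · rw [if_neg h]
      have : Sw G v 0 a = ∅ := by
        apply Finset.eq_empty_of_forall_notMem
        intro w hw
        simp only [Sw, Finset.mem_filter, mem_finsetWalkLength_iff] at hw
        exact h (SimpleGraph.Walk.eq_of_length_eq_zero hw.1)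
      simp [this]
  | succ m ih =>
    intro a
    rw [Fc_succ T hT]
    calc ((Sw G v (m+1) a).card : ℝ)
        ≤ ((∑ d ∈ nextArcs G a, (Sw G v m d).card : ℕ) : ℝ) := by
          exact_mod_cast card_Sw_succ_le v m a
      _ = ∑ d ∈ nextArcs G a, ((Sw G v m d).card : ℝ) := by push_cast; ring
      _ ≤ ∑ d ∈ nextArcs G a, Fc T v m d := Finset.sum_le_sum (fun d _ => ih d)

end Count

section Top
variable {V : Type*} {G : SimpleGraph V} [G.LocallyFinite]

variable (G) in
/-- Paths (as walks) of length `L` from `u` to `v`. -/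
noncomputable def PFin (u v : V) (L : ℕ) : Finset (G.Walk u v) :=
  (G.finsetWalkLength L u v).filter (fun w => w.IsPath)

variable (G) in
noncomputable def xvec (u : V) : l2 G.Dart := ∑ a ∈ outArcs G u, e a

lemma card_PFin_succ_le (u v : V) (m : ℕ) :
    (PFin G u v (m+1)).card ≤ ∑ a ∈ outArcs G u, (Sw G v m a).card := by
  classical
  calc (PFin G u v (m+1)).card
      ≤ (((outArcs G u).sigma (fun d => Sw G v m d)).image some).card := by
        apply Finset.card_le_card_of_injOn (splitW v)
        · intro w hw
          simp only [PFin, Finset.mem_coe, Finset.mem_filter, mem_finsetWalkLength_iff] at hw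
          obtain ⟨hlen, hpath⟩ := hw
          have hnn : ¬ w.Nil := by rw [SimpleGraph.Walk.nil_iff_length_eq]; omega
          obtain ⟨y, h, q, rfl⟩ := SimpleGraph.Walk.not_nil_iff.mp hnn
          have hsw : splitW v (SimpleGraph.Walk.cons h q) =
              some ⟨⟨(u, y), h⟩, q⟩ := rfl
          rw [hsw]
          refine Finset.mem_image.mpr ⟨⟨⟨(u, y), h⟩, q⟩, ?_, rfl⟩
          rw [Finset.mem_sigma]
          refine ⟨mem_outArcs.mpr rfl, ?_⟩
          simp only [Sw, Finset.mem_filter, mem_finsetWalkLength_iff]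
          exact ⟨by simpa using hlen, hpath⟩
        · intro w₁ hw₁ w₂ hw₂ hsp
          simp only [Finset.coe_filter, Set.mem_setOf_eq, PFin, mem_finsetWalkLength_iff] at hw₁
          exact splitW_inj (by omega) hsp
    _ ≤ ((outArcs G u).sigma (fun d => Sw G v m d)).card := Finset.card_image_le
    _ = ∑ a ∈ outArcs G u, (Sw G v m a).card := Finset.card_sigma _ _

variable (T : l2 G.Dart →L[ℝ] l2 G.Dart)
variable (hT : ∀ a b : G.Dart,
      ⟪e a, T (e b)⟫ = if a.toProd.2 = b.toProd.1 ∧ b ≠ a.symm then (1 : 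
ℝ) else 0)

lemma norm_xvec_le (u : V) : ‖xvec G u‖ ≤ (G.degree u : ℝ) := by
  rw [xvec]
  calc ‖∑ a ∈ outArcs G u, e a‖ ≤ ∑ a ∈ outArcs G u, ‖(e a : l2 G.Dart)‖ :=
        norm_sum_le _ _
    _ = ((outArcs G u).card : ℝ) := by simp [norm_e]
    _ = (G.degree u : ℝ) := by rw [card_outArcs]

lemma norm_yvec_le (v : V) : ‖yvec G v‖ ≤ (G.degree v : ℝ) := by
  rw [yvec]
  calc ‖∑ a ∈ inArcs G v, e a‖ ≤ ∑ a ∈ inArcs G v, ‖(e a : l2 G.Dart)‖ :=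
        norm_sum_le _ _
    _ = ((inArcs G v).card : ℝ) := by simp [norm_e]
    _ = (G.degree v : ℝ) := by rw [card_inArcs]

include hT in
lemma card_PFin_le_norm (dmax : ℕ) (hd : ∀ w, G.degree w ≤ dmax) (u v : V) (m : ℕ) :
    ((PFin G u v (m+1)).card : ℝ) ≤ (dmax : ℝ)^2 * ‖T ^ m‖ := by
  have h1 : ((PFin G u v (m+1)).card : ℝ) ≤ ⟪xvec G u, (T ^ m) (yvec G v)⟫ := by
    calc ((PFin G u v (m+1)).card : ℝ)
        ≤ ((∑ a ∈ outArcs G u, (Sw G v m a).card : ℕ) : ℝ) := by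
          exact_mod_cast card_PFin_succ_le u v m
      _ = ∑ a ∈ outArcs G u, ((Sw G v m a).card : ℝ) := by push_cast; ring
      _ ≤ ∑ a ∈ outArcs G u, Fc T v m a := Finset.sum_le_sum (fun a _ => card_Sw_le T hT v m a)
      _ = ⟪xvec G u, (T ^ m) (yvec G v)⟫ := by
          rw [xvec, sum_inner]; rfl
  have h2 : ⟪xvec G u, (T ^ m) (yvec G v)⟫ ≤ ‖xvec G u‖ * (‖T ^ m‖ * ‖yvec G v‖) :=
    (real_inner_le_norm _ _).trans (by
      have := (T ^ m).le_opNorm (yvec G v)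
      exact mul_le_mul_of_nonneg_left this (norm_nonneg _))
  have hxu : ‖xvec G u‖ ≤ (dmax : ℝ) := (norm_xvec_le u).trans (by exact_mod_cast hd u)
  have hyv : ‖yvec G v‖ ≤ (dmax : ℝ) := (norm_yvec_le v).trans (by exact_mod_cast hd v)
  have hop : (0:ℝ) ≤ ‖T ^ m‖ := norm_nonneg _
  have h3 : ‖xvec G u‖ * (‖T ^ m‖ * ‖yvec G v‖) ≤ (dmax:ℝ) * (‖T ^ m‖ * (dmax:ℝ)) := by
    apply mul_le_mul hxu (mul_le_mul_of_nonneg_left hyv hop) (by positivity) (by positivity)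
  calc ((PFin G u v (m+1)).card : ℝ) ≤ ‖xvec G u‖ * (‖T ^ m‖ * ‖yvec G v‖) := h1.trans h2
    _ ≤ (dmax:ℝ) * (‖T ^ m‖ * (dmax:ℝ)) := h3
    _ = (dmax : ℝ)^2 * ‖T ^ m‖ := by ring

end Top

section Analysis
variable {E : Type*} [NormedAddCommGroup E] [NormedSpace ℝ E]

lemma exists_geom_bound (T : E →L[ℝ] E) (ρ ρ' p : ℝ)
    (hρ : Tendsto (fun m : ℕ => ‖T ^ m‖ ^ (1 / (m : ℝ))) atTop (nhds ρ))
    (hp0 : 0 ≤ p) (hρ'0 : 0 < ρ') (hpρ' : p * ρ < ρ') :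
    ∃ C' : ℝ, 1 ≤ C' ∧ ∀ m : ℕ, p ^ m * ‖T ^ m‖ ≤ C' * ρ' ^ m := by
  have key : ∃ M : ℕ, ∀ m, M ≤ m → p ^ m * ‖T ^ m‖ ≤ ρ' ^ m := by
    by_cases hp : p = 0
    · refine ⟨1, fun m hm => ?_⟩
      subst hp
      rw [zero_pow (by omega : m ≠ 0), zero_mul]
      positivity
    · have hppos : 0 < p := lt_of_le_of_ne hp0 (Ne.symm hp)
      have hlt : ρ < ρ' / p := (lt_div_iff₀ hppos).mpr (by linarith [mul_comm p ρ])
      have hev := (hρ.eventually_lt_const hlt).and (eventually_ge_atTop 1)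
      rw [eventually_atTop] at hev
      obtain ⟨M, hM⟩ := hev
      refine ⟨M, fun m hm => ?_⟩
      obtain ⟨hlt', hm1⟩ := hM m hm
      have hx : (0:ℝ) ≤ ‖T ^ m‖ := norm_nonneg _
      have hTm : ‖T ^ m‖ ≤ (ρ' / p) ^ m := by
        have h2 : ((‖T ^ m‖ ^ (1/(m:ℝ)) : ℝ)) ^ m ≤ (ρ' / p) ^ m :=
          pow_le_pow_left₀ (Real.rpow_nonneg hx _) hlt'.le m
        rwa [← Real.rpow_natCast (‖T ^ m‖ ^ (1/(m:ℝ))) m, ← Real.rpow_mul hx,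
          one_div, inv_mul_cancel₀ (by exact_mod_cast (by omega : m ≠ 0) : (m:ℝ) ≠ 0),
          Real.rpow_one] at h2
      calc p ^ m * ‖T ^ m‖ ≤ p ^ m * (ρ' / p) ^ m :=
            mul_le_mul_of_nonneg_left hTm (by positivity)
        _ = ρ' ^ m := by
            rw [div_pow, mul_div_assoc', mul_comm, mul_div_assoc, div_self (by positivity),
              mul_one]
  obtain ⟨M, hM⟩ := key
  set C' : ℝ := 1 + ∑ m ∈ Finset.range M, p ^ m * ‖T ^ m‖ / ρ' ^ m with hC'
  have hterm_nonneg : ∀ m, 0 ≤ p ^ m * ‖T ^ m‖ / ρ' ^ m := fun m => by positivity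
  have hC1 : 1 ≤ C' := le_add_of_nonneg_right (Finset.sum_nonneg fun m _ => hterm_nonneg m)
  refine ⟨C', hC1, fun m => ?_⟩
  by_cases hm : M ≤ m
  · calc p ^ m * ‖T ^ m‖ ≤ ρ' ^ m := hM m hm
      _ = 1 * ρ' ^ m := (one_mul _).symm
      _ ≤ C' * ρ' ^ m := mul_le_mul_of_nonneg_right hC1 (by positivity)
  · have hmem : m ∈ Finset.range M := Finset.mem_range.mpr (by omega)
    have h1 : p ^ m * ‖T ^ m‖ / ρ' ^ m ≤ C' := by
      refine le_trans (Finset.single_le_sum (fun i _ => hterm_nonneg i) hmem) (by linarith)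
    calc p ^ m * ‖T ^ m‖ = (p ^ m * ‖T ^ m‖ / ρ' ^ m) * ρ' ^ m := by
          rw [div_mul_cancel₀]; positivity
      _ ≤ C' * ρ' ^ m := mul_le_mul_of_nonneg_right h1 (by positivity)

end Analysis

section Countable
variable {V : Type*} (G : SimpleGraph V) [G.LocallyFinite]

instance walkCountable (u v : V) : Countable (G.Walk u v) :=
  Countable.of_equiv _ (Equiv.sigmaFiberEquiv (fun w : G.Walk u v => w.length))

end Countable

section MeasureLemma
variable {V : Type*} (G : SimpleGraph V)

lemma measure_open_support (p : ℝ) (μ : Measure (V → Bool))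
    (hBern : ∀ (s : Finset V) (f : V → Bool),
      μ {ω | ∀ v ∈ s, ω v = f v} =
        ∏ v ∈ s, if f v then ENNReal.ofReal p else ENNReal.ofReal (1 - p))
    {u v : V} (w : G.Walk u v) (hw : w.IsPath) :
    μ {ω | ∀ x ∈ w.support, ω x = true} = ENNReal.ofReal p ^ (w.length + 1) := by
  have hs : {ω : V → Bool | ∀ x ∈ w.support, ω x = true}
      = {ω : V → Bool | ∀ x ∈ w.support.toFinset, ω x = (fun _ => true) x} := by
    ext ω; simp [List.mem_toFinset]
  rw [hs, hBern]
  simp only [if_true]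
  rw [Finset.prod_const, List.toFinset_card_of_nodup hw.support_nodup,
    SimpleGraph.Walk.length_support]

end MeasureLemma

set_option maxHeartbeats 1000000 in
/-- Exponential decay of connectivity for site percolation on an infinite locally finite
graph with `p < 1/ρ_{ℓ²}(H)`, where `H` is the Hashimoto matrix realized as a bounded
operator `T` on `ℓ²` of the arcs, with `ρ = lim ‖Tᵐ‖^{1/m}`. -/
theorem connectivity_exponential_decay {V : Type*} [Infinite V]
    (G : SimpleGraph V) [G.LocallyFinite]
    (dmax : ℕ) (hd : ∀ v, G.degree v ≤ dmax)
    (T : l2 G.Dart →L[ℝ] l2 G.Dart)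
    (hT : ∀ a b : G.Dart,
      ⟪e a, T (e b)⟫ = if a.toProd.2 = b.toProd.1 ∧ b ≠ a.symm then (1 : ℝ) else 0)
    (ρ : ℝ) (hρ : Tendsto (fun m : ℕ => ‖T ^ m‖ ^ (1 / (m : ℝ))) atTop (nhds ρ))
    (p : ℝ) (hp0 : 0 ≤ p) (hp1 : p ≤ 1) (hp : p * ρ < 1)
    (μ : Measure (V → Bool)) [IsProbabilityMeasure μ]
    (hBern : ∀ (s : Finset V) (f : V → Bool),
      μ {ω | ∀ v ∈ s, ω v = f v} =
        ∏ v ∈ s, if f v then ENNReal.ofReal p else ENNReal.ofReal (1 - p)) :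
    ∃ (ρ' C : ℝ), ρ' < 1 ∧ 0 < C ∧
      ∀ u v : V, u ≠ v →
        μ {ω | openConn G ω u v} ≤ ENNReal.ofReal (C * ρ' ^ (G.dist u v)) := by
  classical
  -- choose ρ'
  have hρnn : 0 ≤ ρ := ge_of_tendsto' hρ (fun m => Real.rpow_nonneg (norm_nonneg _) _)
  set ρ' : ℝ := max (1/2) ((p * ρ + 1)/2) with hρ'def
  have hρ'0 : 0 < ρ' := lt_of_lt_of_le (by norm_num) (le_max_left _ _)
  have hρ'1 : ρ' < 1 := max_lt (by norm_num) (by linarith)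
  have hpρ' : p * ρ < ρ' := lt_of_lt_of_le (by linarith) (le_max_right _ _)
  obtain ⟨C', hC'1, hC'⟩ := exists_geom_bound T ρ ρ' p hρ hp0 hρ'0 hpρ'
  set K : ℝ := ((dmax : ℝ)^2 + 1) * C' with hKdef
  have hK0 : 0 < K := mul_pos (by positivity) (by linarith)
  set C : ℝ := K / (ρ' * (1 - ρ')) with hCdef
  have hC0 : 0 < C := div_pos hK0 (mul_pos hρ'0 (by linarith))
  refine ⟨ρ', C, hρ'1, hC0, fun u v huv => ?_⟩
  by_cases hreach : G.Reachable u v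
  swap
  · have hempty : {ω | openConn G ω u v} = (∅ : Set (V → Bool)) := by
      ext ω
      simp only [Set.mem_setOf_eq, Set.mem_empty_iff_false, iff_false]
      rintro ⟨w, -⟩
      exact hreach ⟨w⟩
    rw [hempty, measure_empty]
    positivity
  -- reachable case
  have hdpos : 0 < G.dist u v := hreach.pos_dist_of_ne huv
  obtain ⟨d₀, hd₀⟩ : ∃ d₀, G.dist u v = d₀ + 1 := ⟨G.dist u v - 1, by omega⟩
  -- Step A: union bound over paths
  have hsub : {ω | openConn G ω u v} ⊆
      ⋃ (q : {w : G.Walk u v // w.IsPath}), {ω | ∀ x ∈ q.1.support, ω x = true} := by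
    rintro ω ⟨w, hw⟩
    exact Set.mem_iUnion.mpr ⟨⟨w.toPath.1, w.toPath.2⟩,
      fun x hx => hw x (w.support_toPath_subset hx)⟩
  have hA : μ {ω | openConn G ω u v} ≤
      ∑' (q : {w : G.Walk u v // w.IsPath}), μ {ω | ∀ x ∈ q.1.support, ω x = true} :=
    (measure_mono hsub).trans (measure_iUnion_le _)
  -- Step B: each term
  have hB : ∀ q : {w : G.Walk u v // w.IsPath},
      μ {ω | ∀ x ∈ q.1.support, ω x = true} = ENNReal.ofReal p ^ (q.1.length + 1) :=
    fun q => measure_open_support G p μ hBern q.1 q.2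
  -- fiber fintype
  let eqvL : ∀ L : ℕ, {w : G.Walk u v // w.IsPath ∧ w.length = L} ≃
      {q : {w : G.Walk u v // w.IsPath} // q.1.length = L} := fun L =>
    ⟨fun x => ⟨⟨x.1, x.2.1⟩, x.2.2⟩, fun q => ⟨q.1.1, q.1.2, q.2⟩,
      fun x => rfl, fun q => rfl⟩
  haveI fibFT : ∀ L : ℕ, Fintype {q : {w : G.Walk u v // w.IsPath} // q.1.length = L} :=
    fun L => Fintype.ofEquiv _ (eqvL L)
  set N : ℕ → ℕ := fun L => Fintype.card {w : G.Walk u v // w.IsPath ∧ w.length = L}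
    with hNdef
  -- Step C: reindex
  have hC2 : ∑' (q : {w : G.Walk u v // w.IsPath}), ENNReal.ofReal p ^ (q.1.length + 1)
      = ∑' (L : ℕ), (N L : ℝ≥0∞) * ENNReal.ofReal p ^ (L + 1) := by
    rw [← Equiv.tsum_eq (Equiv.sigmaFiberEquiv
      (fun q : {w : G.Walk u v // w.IsPath} => q.1.length))
      (fun q => ENNReal.ofReal p ^ (q.1.length + 1)), ENNReal.tsum_sigma']
    congr 1
    funext L
    have hconst : ∀ j : {q : {w : G.Walk u v // w.IsPath} // q.1.length = L},
        ENNReal.ofReal p ^ (((Equiv.sigmaFiberEquiv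
          (fun q : {w : G.Walk u v // w.IsPath} => q.1.length)) ⟨L, j⟩).1.length + 1)
        = ENNReal.ofReal p ^ (L + 1) := by
      rintro ⟨q, hq⟩
      simp [Equiv.sigmaFiberEquiv, hq]
    rw [tsum_congr hconst, tsum_fintype, Finset.sum_const, Finset.card_univ, nsmul_eq_mul]
    congr 2
    rw [hNdef]
    exact (Fintype.card_congr (eqvL L)).symm
  -- N L = card of PFin
  have hNP : ∀ L, N L = (PFin G u v L).card := by
    intro L
    rw [hNdef]
    apply Fintype.card_of_subtype
    intro w
    simp only [PFin, Finset.mem_filter, mem_finsetWalkLength_iff]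
    tauto
  -- N L = 0 for L < dist
  have hN0 : ∀ L, L < G.dist u v → N L = 0 := by
    intro L hL
    rw [hNdef]
    rw [Fintype.card_eq_zero_iff]
    refine ⟨fun ⟨w, hw, hl⟩ => ?_⟩
    have := SimpleGraph.dist_le w
    omega
  -- per-term bound for L ≥ dist
  have hterm : ∀ j : ℕ, (N (j + (d₀ + 1)) : ℝ≥0∞) * ENNReal.ofReal p ^ ((j + (d₀ + 1)) + 1)
      ≤ ENNReal.ofReal (K * ρ' ^ (d₀ + j)) := by
    intro j
    have hcard : ((N (j + (d₀ + 1)) : ℕ) : ℝ) ≤ (dmax : ℝ)^2 * ‖T ^ (j + d₀)‖ := by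
      rw [hNP]
      have h := card_PFin_le_norm T hT dmax hd u v (j + d₀)
      have : j + (d₀ + 1) = (j + d₀) + 1 := by omega
      rw [this]
      exact h
    have hreal : ((N (j + (d₀ + 1)) : ℕ) : ℝ) * p ^ ((j + (d₀ + 1)) + 1)
        ≤ K * ρ' ^ (d₀ + j) := by
      have hp2 : p ^ ((j + (d₀ + 1)) + 1) ≤ p ^ (j + d₀) := by
        apply pow_le_pow_of_le_one hp0 hp1
        omega
      have h1 : ((N (j + (d₀ + 1)) : ℕ) : ℝ) * p ^ ((j + (d₀ + 1)) + 1)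
          ≤ ((dmax : ℝ)^2 * ‖T ^ (j + d₀)‖) * p ^ (j + d₀) := by
        apply mul_le_mul hcard hp2 (by positivity) (by positivity)
      have h2 : ((dmax : ℝ)^2 * ‖T ^ (j + d₀)‖) * p ^ (j + d₀)
          = (dmax : ℝ)^2 * (p ^ (j + d₀) * ‖T ^ (j + d₀)‖) := by ring
      have h3 : (dmax : ℝ)^2 * (p ^ (j + d₀) * ‖T ^ (j + d₀)‖)
          ≤ (dmax : ℝ)^2 * (C' * ρ' ^ (j + d₀)) :=
        mul_le_mul_of_nonneg_left (hC' (j + d₀)) (by positivity)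
      have h4 : (dmax : ℝ)^2 * (C' * ρ' ^ (j + d₀)) ≤ K * ρ' ^ (d₀ + j) := by
        rw [hKdef, add_comm d₀ j]
        have : ((dmax : ℝ)^2 + 1) * C' * ρ' ^ (j + d₀)
            = (dmax : ℝ)^2 * (C' * ρ' ^ (j + d₀)) + C' * ρ' ^ (j + d₀) := by ring
        rw [this]
        have : (0:ℝ) ≤ C' * ρ' ^ (j + d₀) := by positivity
        linarith
      linarith
    calc (N (j + (d₀ + 1)) : ℝ≥0∞) * ENNReal.ofReal p ^ ((j + (d₀ + 1)) + 1)
        = ENNReal.ofReal (((N (j + (d₀ + 1)) : ℕ) : ℝ) * p ^ ((j + (d₀ + 1)) + 1)) := by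
          rw [ENNReal.ofReal_mul (by positivity), ENNReal.ofReal_pow hp0,
            ENNReal.ofReal_natCast]
      _ ≤ ENNReal.ofReal (K * ρ' ^ (d₀ + j)) := ENNReal.ofReal_le_ofReal hreal
  -- sum it up
  have hsum : ∑' (L : ℕ), (N L : ℝ≥0∞) * ENNReal.ofReal p ^ (L + 1)
      ≤ ENNReal.ofReal (C * ρ' ^ (G.dist u v)) := by
    have hshift : ∑' (L : ℕ), (N L : ℝ≥0∞) * ENNReal.ofReal p ^ (L + 1)
        = ∑' (j : ℕ), (N (j + (d₀ + 1)) : ℝ≥0∞) * ENNReal.ofReal p ^ ((j + (d₀ + 1)) + 1) := by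
      refine (Function.Injective.tsum_eq (g := fun j : ℕ => j + (d₀ + 1))
        (fun j j' h => by simpa using h) ?_).symm
      intro L hL
      simp only [Function.mem_support] at hL
      rcases le_or_gt (d₀ + 1) L with h | h
      · exact ⟨L - (d₀ + 1), by simp; omega⟩
      · exfalso
        apply hL
        show (N L : ℝ≥0∞) * ENNReal.ofReal p ^ (L + 1) = 0
        rw [hN0 L (by omega)]
        simp
    rw [hshift]
    calc ∑' (j : ℕ), (N (j + (d₀ + 1)) : ℝ≥0∞) * ENNReal.ofReal p ^ ((j + (d₀ + 1)) + 1)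
        ≤ ∑' (j : ℕ), ENNReal.ofReal (K * ρ' ^ (d₀ + j)) := ENNReal.tsum_le_tsum hterm
      _ = ENNReal.ofReal (∑' (j : ℕ), K * ρ' ^ (d₀ + j)) := by
          rw [ENNReal.ofReal_tsum_of_nonneg (fun j => by positivity)]
          have : (fun j : ℕ => K * ρ' ^ (d₀ + j)) = fun j : ℕ => (K * ρ' ^ d₀) * ρ' ^ j := by
            funext j; rw [pow_add]; ring
          rw [this]
          exact (summable_geometric_of_lt_one hρ'0.le hρ'1).mul_left _
      _ ≤ ENNReal.ofReal (C * ρ' ^ (G.dist u v)) := by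
          apply ENNReal.ofReal_le_ofReal
          have hre : (fun j : ℕ => K * ρ' ^ (d₀ + j)) = fun j : ℕ => (K * ρ' ^ d₀) * ρ' ^ j := by
            funext j; rw [pow_add]; ring
          rw [hre, tsum_mul_left, tsum_geometric_of_lt_one hρ'0.le hρ'1]
          rw [hd₀, hCdef, pow_succ]
          apply le_of_eq
          have hne1 : (1 - ρ') ≠ 0 := by linarith
          have hne2 : ρ' ≠ 0 := ne_of_gt hρ'0
          field_simp
  calc μ {ω | openConn G ω u v}
      ≤ ∑' (q : {w : G.Walk u v // w.IsPath}), μ {ω | ∀ x ∈ q.1.support, ω x = true} := hA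
    _ = ∑' (L : ℕ), (N L : ℝ≥0∞) * ENNReal.ofReal p ^ (L + 1) := by
        rw [tsum_congr hB, hC2]
    _ ≤ ENNReal.ofReal (C * ρ' ^ (G.dist u v)) := hsum
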